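/- For any k, N ∈ ℕ and 1 ≤ ℓ ≤ min{k, N}, let 𝒢_N(k,ℓ) be the set of rooted even digraphs G = (V,E,ρ) with V ⊆ [N], |V| = ℓ, and |E| = 2k (edges counted with multiplicity). Then |𝒢_N(k,ℓ)| ≤ N^ℓ · k^{2(k−ℓ)+1}. -/

import Mathlib

/-- A multi digraph on `[N]`: a vertex set `V ⊆ [N]` together with a finite
multiset `E` of directed edges with endpoints in `V`. -/
structure MultiDigraph (N : ℕ) where
  V : Finset (Fin N)
  E : Multiset (Fin N × Fin N)
  edge_mem : ∀ e ∈ E, e.1 ∈ V ∧ e.2 ∈ V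

namespace MultiDigraph

variable {N : ℕ}

/-- Out-degree: number of edges leaving `v`, counted with multiplicity. -/
def degPlus (G : MultiDigraph N) (v : Fin N) : ℕ :=
  Multiset.card (G.E.filter fun e => e.1 = v)

/-- In-degree: number of edges entering `v`, counted with multiplicity. -/
def degMinus (G : MultiDigraph N) (v : Fin N) : ℕ :=
  Multiset.card (G.E.filter fun e => e.2 = v)

/-- A multi digraph is strongly connected if it has at least one vertex and one can
travel between any two vertices following edges of `E`. -/
def StronglyConnected (G : MultiDigraph N) : Prop :=
  G.V.Nonempty ∧ ∀ u ∈ G.V, ∀ v ∈ G.V,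
    Relation.ReflTransGen (fun a b => (a, b) ∈ G.E) u v

end MultiDigraph

/-- The multiset of adjacent pairs (edges) traversed by a path, with multiplicity.
A path of length `m` is recorded as a list of `m+1` vertices. -/
def pathEdges {N : ℕ} (P : List (Fin N)) : Multiset (Fin N × Fin N) :=
  ↑(P.zip P.tail)

/-- A (nonempty) path is closed if its first and last vertices coincide. -/
def IsClosedPath {N : ℕ} (P : List (Fin N)) : Prop :=
  P ≠ [] ∧ P.head? = P.getLast?

/-- An even path: a closed path in which every ordered pair occurs an even number of
times among the adjacent pairs. -/
def IsEvenPath {N : ℕ} (P : List (Fin N)) : Prop :=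
  IsClosedPath P ∧ ∀ e : Fin N × Fin N, Even ((pathEdges P).count e)

/-- The path `P` generates the multi digraph `G`. -/
def Generates {N : ℕ} (P : List (Fin N)) (G : MultiDigraph N) : Prop :=
  G.V = P.toFinset ∧ G.E = pathEdges P

/-- An even digraph is a multi digraph generated by an even closed path. -/
def IsEvenDigraph {N : ℕ} (G : MultiDigraph N) : Prop :=
  ∃ P : List (Fin N), IsEvenPath P ∧ Generates P G

/-- A cycle: a closed path with no repeated vertices except that the first and
last coincide (a loop is a cycle of length 1). -/
def IsCycle {N : ℕ} (P : List (Fin N)) : Prop :=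
  2 ≤ P.length ∧ P.head? = P.getLast? ∧ P.dropLast.Nodup

/-- A double cycle: the multi digraph generated by traversing a cycle twice. -/
def IsDoubleCycle {N : ℕ} (G : MultiDigraph N) : Prop :=
  ∃ C : List (Fin N), IsCycle C ∧ G.V = C.toFinset ∧ G.E = pathEdges C + pathEdges C

/-- A rooted multi digraph: a multi digraph with a distinguished edge. -/
structure RootedMultiDigraph (N : ℕ) where
  G : MultiDigraph N
  root : Fin N × Fin N
  root_mem : root ∈ G.E

/-- Isomorphism of multi digraphs on `[N]`. -/
def MultiDigraph.Iso {N : ℕ} (G G' : MultiDigraph N) : Prop :=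
  ∃ f : Fin N → Fin N, Set.InjOn f ↑G.V ∧ G.V.image f = G'.V ∧
    G.E.map (Prod.map f f) = G'.E

/-- Isomorphism of rooted multi digraphs on `[N]`. -/
def RootedMultiDigraph.Iso {N : ℕ} (G G' : RootedMultiDigraph N) : Prop :=
  ∃ f : Fin N → Fin N, Set.InjOn f ↑G.G.V ∧ G.G.V.image f = G'.G.V ∧
    G.G.E.map (Prod.map f f) = G'.G.E ∧ Prod.map f f G.root = G'.root

/-- The weight `p(G) = ∏ a_{i,j}^{n_{i,j}}` of a multi digraph. -/
def pWeight {N : ℕ} (a : Fin N → Fin N → ℝ) (G : MultiDigraph N) : ℝ :=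
  (G.E.map fun e => a e.1 e.2).prod

/-- The weight `p_r(G)` of a rooted multi digraph: the multiplicity of the root
edge is reduced by `2`. -/
def prWeight {N : ℕ} (a : Fin N → Fin N → ℝ) (G : RootedMultiDigraph N) : ℝ :=
  ((G.G.E - {G.root, G.root}).map fun e => a e.1 e.2).prod

/-- `S_h(𝒰)` for the unlabeled class of `U`. -/
noncomputable def Sh {N : ℕ} (a : Fin N → Fin N → ℝ) (U : MultiDigraph N) (h : ℕ) : ℝ :=
  2 ^ h * ({G : MultiDigraph N | U.Iso G ∧ 2 ^ h ≤ pWeight a G}.ncard : ℝ)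
    / ({G : MultiDigraph N | U.Iso G}.ncard : ℝ)

/-- `S_h(𝒰)` for the unlabeled class of a rooted digraph `U`. -/
noncomputable def ShR {N : ℕ} (a : Fin N → Fin N → ℝ) (U : RootedMultiDigraph N) (h : ℕ) : ℝ :=
  2 ^ h * ({G : RootedMultiDigraph N | U.Iso G ∧ 2 ^ h ≤ prWeight a G}.ncard : ℝ)
    / ({G : RootedMultiDigraph N | U.Iso G}.ncard : ℝ)

/-- The statistics `S(𝒰) = max(1, sup_h S_h(𝒰))` of a rooted class. -/
noncomputable def SR {N : ℕ} (a : Fin N → Fin N → ℝ) (U : RootedMultiDigraph N) : ℝ :=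
  max 1 (⨆ h : ℕ, ShR a U h)

/-- Condition `A_k` on a family of nonnegative weights. -/
def CondA (N k : ℕ) (ε B : ℝ) (a : Fin N → Fin N → ℝ) : Prop :=
  ∀ m : ℕ, 1 ≤ m → m ≤ k →
    (∀ C : MultiDigraph N, IsDoubleCycle C → Multiset.card C.E = 2 * m →
      (∑' h : ℕ, Sh a C h) ≤ (k : ℝ) ^ 2 ∧
      (∑' h : ℕ, (2 : ℝ) ^ ((h : ℝ) * ε / 2) * Sh a C h) ≤ (k : ℝ) ^ 2 * B ^ m) ∧
    (∀ C : RootedMultiDigraph N, IsDoubleCycle C.G → Multiset.card C.G.E = 2 * m →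
      (∑' h : ℕ, ShR a C h) ≤ (k : ℝ) ^ 2)


namespace GraphCountAux


open List

variable {N : ℕ}

/-- The cyclic edge multiset of a list viewed as a closed walk. -/
def cyc (L : List (Fin N)) : Multiset (Fin N × Fin N) := ↑(L.zip (L.rotate 1))

lemma cyc_card (L : List (Fin N)) : Multiset.card (cyc L) = L.length := by
  simp [cyc, List.length_zip]

lemma zip_rotate_map_fst (L : List (Fin N)) : (L.zip (L.rotate 1)).map Prod.fst = L :=
  List.map_fst_zip (by simp)

lemma zip_rotate_map_snd (L : List (Fin N)) : (L.zip (L.rotate 1)).map Prod.snd = L.rotate 1 :=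
  List.map_snd_zip (by simp)

lemma cyc_map_fst (L : List (Fin N)) : (cyc L).map Prod.fst = ↑L := by
  simp [cyc, zip_rotate_map_fst]

lemma mem_of_mem_cyc {L : List (Fin N)} {e : Fin N × Fin N} (h : e ∈ cyc L) :
    e.1 ∈ L ∧ e.2 ∈ L := by
  have := List.of_mem_zip (Multiset.mem_coe.1 h)
  exact ⟨this.1, (List.rotate_perm L 1).mem_iff.1 this.2⟩

lemma mem_cyc_fst {L : List (Fin N)} {x : Fin N} :
    x ∈ L ↔ ∃ e ∈ cyc L, e.1 = x := by
  constructor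
  · intro hx
    have : x ∈ (L.zip (L.rotate 1)).map Prod.fst := by rw [zip_rotate_map_fst]; exact hx
    obtain ⟨e, he, hex⟩ := List.mem_map.1 this
    exact ⟨e, Multiset.mem_coe.2 he, hex⟩
  · rintro ⟨e, he, rfl⟩
    exact (mem_of_mem_cyc he).1

/-- out-degree of a multiset of arcs -/
def dOut (F : Multiset (Fin N × Fin N)) (v : Fin N) : ℕ :=
  Multiset.card (F.filter fun e => e.1 = v)

def dIn (F : Multiset (Fin N × Fin N)) (v : Fin N) : ℕ :=
  Multiset.card (F.filter fun e => e.2 = v)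

lemma dOut_eq_count (F : Multiset (Fin N × Fin N)) (v : Fin N) :
    dOut F v = (F.map Prod.fst).count v := by
  rw [dOut, Multiset.count_map]
  congr 1
  exact Multiset.filter_congr (fun x _ => by simp [eq_comm])

lemma dIn_eq_count (F : Multiset (Fin N × Fin N)) (v : Fin N) :
    dIn F v = (F.map Prod.snd).count v := by
  rw [dIn, Multiset.count_map]
  congr 1
  exact Multiset.filter_congr (fun x _ => by simp [eq_comm])

lemma cyc_balanced (L : List (Fin N)) (v : Fin N) : dOut (cyc L) v = dIn (cyc L) v := by
  rw [dOut_eq_count, dIn_eq_count]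
  simp only [cyc, Multiset.map_coe, zip_rotate_map_fst, zip_rotate_map_snd]
  rw [Multiset.coe_count, Multiset.coe_count]
  exact ((List.rotate_perm L 1).count_eq v).symm

lemma dOut_add (F G : Multiset (Fin N × Fin N)) (v : Fin N) :
    dOut (F + G) v = dOut F v + dOut G v := by simp [dOut, Multiset.filter_add]

lemma dIn_add (F G : Multiset (Fin N × Fin N)) (v : Fin N) :
    dIn (F + G) v = dIn F v + dIn G v := by simp [dIn, Multiset.filter_add]

lemma zip_drop' (l l' : List (Fin N)) (n : ℕ) :
    (l.zip l').drop n = (l.drop n).zip (l'.drop n) := by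
  simp only [List.zip_eq_zipWith, List.drop_zipWith]

lemma zip_take' (l l' : List (Fin N)) (n : ℕ) :
    (l.zip l').take n = (l.take n).zip (l'.take n) := by
  simp only [List.zip_eq_zipWith, List.take_zipWith]

lemma zip_rotate (l l' : List (Fin N)) (n : ℕ) (h : l.length = l'.length) (hn : n ≤ l.length) :
    (l.rotate n).zip (l'.rotate n) = (l.zip l').rotate n := by
  rw [List.rotate_eq_drop_append_take hn, List.rotate_eq_drop_append_take (h ▸ hn),
    List.rotate_eq_drop_append_take (by rw [List.length_zip, ← h, min_self]; exact hn)]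
  rw [List.zip_append (by simp [h]), ← zip_drop', ← zip_take']

lemma cyc_rotate (L : List (Fin N)) (n : ℕ) : cyc (L.rotate n) = cyc L := by
  rcases Nat.eq_zero_or_pos L.length with h0 | hpos
  · rw [List.eq_nil_of_length_eq_zero h0]; simp
  have hn : n % L.length ≤ L.length := le_of_lt (Nat.mod_lt _ hpos)
  rw [cyc, cyc, ← List.rotate_mod L n]
  have h1 : (L.rotate (n % L.length)).rotate 1 = (L.rotate 1).rotate (n % L.length) := by
    rw [List.rotate_rotate, List.rotate_rotate, Nat.add_comm]
  rw [h1, zip_rotate _ _ _ (by simp) hn]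
  exact Multiset.coe_eq_coe.2 (List.rotate_perm _ _)

lemma zip_append_right_trunc (l r l' : List (Fin N)) (h : l.length = l'.length) :
    (l ++ r).zip l' = l.zip l' := by
  induction l generalizing l' with
  | nil => cases l' with
    | nil => simp
    | cons a t => simp at h
  | cons a t ih => cases l' with
    | nil => simp at h
    | cons b t' => simpa using ih t' (by simpa using h)

lemma rotate_one_cons (a : Fin N) (t : List (Fin N)) : (a :: t).rotate 1 = t ++ [a] := by
  rw [List.rotate_eq_drop_append_take (by simp)]
  simp

/-- splicing two closed walks sharing the same starting vertex -/
lemma cyc_append (a : Fin N) (t1 t2 : List (Fin N)) :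
    cyc ((a :: t1) ++ (a :: t2)) = cyc (a :: t1) + cyc (a :: t2) := by
  have h1 : ((a :: t1) ++ (a :: t2)).rotate 1 = (t1 ++ [a]) ++ (t2 ++ [a]) := by
    rw [List.cons_append, rotate_one_cons]
    simp
  rw [cyc, h1, List.cons_append, ← List.cons_append,
    List.zip_append (by simp), cyc, cyc, rotate_one_cons, rotate_one_cons]
  exact Multiset.coe_add ..

lemma exists_rotate_head' {L : List (Fin N)} {v : Fin N} (h : v ∈ L) :
    ∃ n t, L.rotate n = v :: t := by
  obtain ⟨s, t, rfl⟩ := List.append_of_mem h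
  refine ⟨s.length, t ++ s, ?_⟩
  rw [List.rotate_eq_drop_append_take (by simp), List.drop_left, List.take_left]
  simp

lemma dOut_cons (e : Fin N × Fin N) (G : Multiset (Fin N × Fin N)) (u : Fin N) :
    dOut (e ::ₘ G) u = (if e.1 = u then 1 else 0) + dOut G u := by
  simp [dOut, Multiset.filter_cons]
  split <;> simp

lemma dIn_cons (e : Fin N × Fin N) (G : Multiset (Fin N × Fin N)) (u : Fin N) :
    dIn (e ::ₘ G) u = (if e.2 = u then 1 else 0) + dIn G u := by
  simp [dIn, Multiset.filter_cons]
  split <;> simp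

lemma exists_mem_of_dOut_pos {F : Multiset (Fin N × Fin N)} {w : Fin N}
    (h : 0 < dOut F w) : ∃ e ∈ F, e.1 = w := by
  rw [dOut, Multiset.card_pos_iff_exists_mem] at h
  obtain ⟨e, he⟩ := h
  rw [Multiset.mem_filter] at he
  exact ⟨e, he.1, he.2⟩

/-- Existence of a trail from `w` to `v` in a semi-balanced multiset of arcs. -/
lemma exists_trail : ∀ n (F : Multiset (Fin N × Fin N)), Multiset.card F = n →
    ∀ v w : Fin N, v ≠ w →
    dOut F w = dIn F w + 1 → dIn F v = dOut F v + 1 →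
    (∀ u, u ≠ v → u ≠ w → dOut F u = dIn F u) →
    ∃ M : List (Fin N), M.head? = some w ∧ M.getLast? = some v ∧ ↑(M.zip M.tail) ≤ F := by
  intro n
  induction n with
  | zero =>
      intro F hc v w hvw hw hv _
      rw [Multiset.card_eq_zero] at hc
      subst hc
      simp [dOut, dIn] at hw
  | succ n ih =>
      intro F hc v w hvw hw h289 hbal
      obtain ⟨e, heF, he1⟩ := exists_mem_of_dOut_pos (w := w) (F := F) (by omega)
      set x := e.2 with hx
      have hF : F = e ::ₘ F.erase e := (Multiset.cons_erase heF).symm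
      set F' := F.erase e with hF'
      have hcard : Multiset.card F' = n := by
        rw [hF] at hc; simp at hc; omega
      have hee : e = (e.1, e.2) := rfl
      by_cases hxv : x = v
      · refine ⟨[w, v], rfl, rfl, ?_⟩
        have he' : e = (w, v) := by rw [hee, he1, ← hx, hxv]
        show ↑([(w, v)]) ≤ F
        rw [Multiset.coe_singleton, Multiset.singleton_le, ← he']
        exact heF
      · -- recurse from x
        have hout : ∀ u, dOut F u = (if u = w then 1 else 0) + dOut F' u := by
          intro u
          rw [hF, dOut_cons, he1]
          simp [eq_comm]
        have hin : ∀ u, dIn F u = (if u = x then 1 else 0) + dIn F' u := by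
          intro u
          rw [hF, dIn_cons, ← hx]
          simp [eq_comm]
        have h1 : dOut F' x = dIn F' x + 1 := by
          by_cases hxw : x = w
          · have a1 := hout x; have a2 := hin x
            rw [hxw] at a1 a2 ⊢
            simp at a1 a2
            omega
          · have a1 := hout x; have a2 := hin x
            have := hbal x hxv hxw
            simp [hxw] at a1 a2
            omega
        have h2 : dIn F' v = dOut F' v + 1 := by
          have a1 := hout v; have a2 := hin v
          rw [if_neg hvw] at a1
          rw [if_neg (Ne.symm hxv)] at a2
          omega
        have h3 : ∀ u, u ≠ v → u ≠ x → dOut F' u = dIn F' u := by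
          intro u huv hux
          have a1 := hout u; have a2 := hin u
          by_cases huw : u = w
          · subst huw
            have := hw
            simp [hux] at a2
            simp at a1
            omega
          · have := hbal u huv huw
            simp [huw, hux] at a1 a2
            omega
        obtain ⟨M, hMh, hMl, hME⟩ := ih F' hcard v x (Ne.symm hxv) h1 h2 h3
        cases M with
        | nil => simp at hMh
        | cons y M0 =>
          have hy : y = x := by simpa using hMh
          refine ⟨w :: y :: M0, rfl, ?_, ?_⟩
          · rw [List.getLast?_cons_cons]; exact hMl
          · show ↑((w :: y :: M0).zip (y :: M0)) ≤ F
            have hz : (w :: y :: M0).zip (y :: M0) = (w, y) :: (y :: M0).zip M0 := rfl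
            rw [hz, ← Multiset.cons_coe, hF]
            have he' : (w, y) = e := by rw [hee, he1, hy, hx]
            rw [he']
            exact Multiset.cons_le_cons e hME

lemma exists_closed_trail (F : Multiset (Fin N × Fin N)) (bal : ∀ u, dOut F u = dIn F u)
    (v : Fin N) (hv : 0 < dOut F v) :
    ∃ L : List (Fin N), L ≠ [] ∧ L.head? = some v ∧ cyc L ≤ F := by
  obtain ⟨e, heF, he1⟩ := exists_mem_of_dOut_pos hv
  have hee : e = (e.1, e.2) := rfl
  set x := e.2 with hx
  by_cases hxv : x = v
  · refine ⟨[v], by simp, rfl, ?_⟩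
    have he' : e = (v, v) := by rw [hee, he1, hxv]
    have : cyc [v] = ↑([(v, v)]) := by
      simp [cyc, List.rotate_singleton]
    rw [this, Multiset.coe_singleton, Multiset.singleton_le, ← he']
    exact heF
  · set F' := F.erase e with hF'
    have hF : F = e ::ₘ F' := (Multiset.cons_erase heF).symm
    have hout : ∀ u, dOut F u = (if u = v then 1 else 0) + dOut F' u := by
      intro u; rw [hF, dOut_cons, he1]; simp [eq_comm]
    have hin : ∀ u, dIn F u = (if u = x then 1 else 0) + dIn F' u := by
      intro u; rw [hF, dIn_cons, ← hx]; simp [eq_comm]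
    have h1 : dOut F' x = dIn F' x + 1 := by
      have a1 := hout x; have a2 := hin x
      rw [if_neg hxv] at a1
      rw [if_pos rfl] at a2
      have := bal x; omega
    have h2 : dIn F' v = dOut F' v + 1 := by
      have a1 := hout v; have a2 := hin v
      rw [if_pos rfl] at a1
      rw [if_neg (Ne.symm hxv)] at a2
      have := bal v; omega
    have h3 : ∀ u, u ≠ v → u ≠ x → dOut F' u = dIn F' u := by
      intro u huv hux
      have a1 := hout u; have a2 := hin u
      rw [if_neg huv] at a1
      rw [if_neg hux] at a2
      have := bal u; omega
    obtain ⟨M, hMh, hMl, hME⟩ := exists_trail (Multiset.card F') F' rfl v x (Ne.symm hxv) h1 h2 h3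
    have hMne : M ≠ [] := by rintro rfl; simp at hMh
    have hMlast : M.dropLast ++ [v] = M := by
      have h' := List.dropLast_append_getLast hMne
      have hgl : M.getLast hMne = v := by
        rw [List.getLast?_eq_getLast hMne] at hMl
        exact Option.some_inj.1 hMl
      rw [← hgl]; exact h'
    refine ⟨v :: M.dropLast, by simp, rfl, ?_⟩
    have hlen : (v :: M.dropLast).length = M.length := by
      cases M with
      | nil => simp at hMne
      | cons a t => simp
    have hcalc : cyc (v :: M.dropLast) = ↑((v :: M).zip M) := by
      rw [cyc, rotate_one_cons, hMlast]
      congr 1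
      have : v :: M = (v :: M.dropLast) ++ [v] := by rw [List.cons_append, hMlast]
      rw [this, zip_append_right_trunc _ _ _ (by rw [hlen])]
    rw [hcalc]
    cases M with
    | nil => simp at hMne
    | cons y M0 =>
      have hy : y = x := by simpa using hMh
      have hz : (v :: y :: M0).zip (y :: M0) = (v, y) :: (y :: M0).zip M0 := rfl
      rw [hz, ← Multiset.cons_coe, hF]
      have he' : (v, y) = e := by rw [hee, he1, hy, hx]
      rw [he']
      exact Multiset.cons_le_cons e hME

/-- adjacency relation between arcs of `F` -/
def step (F : Multiset (Fin N × Fin N)) (a b : Fin N × Fin N) : Prop := b ∈ F ∧ a.2 = b.1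

lemma euler_aux (F : Multiset (Fin N × Fin N)) (bal : ∀ u, dOut F u = dIn F u)
    (conn : ∀ e ∈ F, ∀ f ∈ F, Relation.ReflTransGen (step F) e f) :
    ∀ d : ℕ, ∀ L : List (Fin N), L ≠ [] → cyc L ≤ F →
      Multiset.card F ≤ Multiset.card (cyc L) + d →
      ∃ L' : List (Fin N), L' ≠ [] ∧ cyc L' = F := by
  intro d
  induction d with
  | zero =>
      intro L hL hle hcard
      exact ⟨L, hL, Multiset.eq_of_le_of_card_le hle (by omega)⟩
  | succ d ih =>
      intro L hL hle hcard
      by_cases heq : cyc L = F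
      · exact ⟨L, hL, heq⟩
      set R := F - cyc L with hR
      have hFR : cyc L + R = F := by
        rw [hR, add_comm]
        exact tsub_add_cancel_of_le hle
      have hRne : R ≠ 0 := by
        intro h0
        rw [h0, add_zero] at hFR
        exact heq hFR
      have balR : ∀ u, dOut R u = dIn R u := by
        intro u
        have a1 : dOut F u = dOut (cyc L) u + dOut R u := by rw [← hFR, dOut_add]
        have a2 : dIn F u = dIn (cyc L) u + dIn R u := by rw [← hFR, dIn_add]
        have := bal u; have := cyc_balanced L u; omega
      -- find a vertex of L with positive out-degree in R
      have hclaim : ∃ v ∈ L, 0 < dOut R v := by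
        by_contra hcon
        push_neg at hcon
        obtain ⟨f, hfR⟩ := Multiset.exists_mem_of_ne_zero hRne
        have hmemL : ∀ g : Fin N × Fin N, g ∈ R → g.1 ∉ L ∧ g.2 ∉ L := by
          intro g hg
          constructor
          · intro hgL
            have : 0 < dOut R g.1 := by
              rw [dOut, Multiset.card_pos_iff_exists_mem]
              exact ⟨g, Multiset.mem_filter.2 ⟨hg, rfl⟩⟩
            have := hcon g.1 hgL
            omega
          · intro hgL
            have : 0 < dIn R g.2 := by
              rw [dIn, Multiset.card_pos_iff_exists_mem]
              exact ⟨g, Multiset.mem_filter.2 ⟨hg, rfl⟩⟩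
            have := hcon g.2 hgL
            have := balR g.2
            omega
        have hinv : ∀ g, Relation.ReflTransGen (step F) f g → g ∈ R := by
          intro g hg
          induction hg with
          | refl => exact hfR
          | tail h1 h2 ihg =>
            rename_i b c
            have hc1 : c.1 ∉ L := by rw [← h2.2]; exact (hmemL b ihg).2
            have hnc : c ∉ cyc L := fun hcc => hc1 (mem_of_mem_cyc hcc).1
            have hcnt : R.count c = F.count c - (cyc L).count c := by
              rw [hR, Multiset.count_sub]
            rw [← Multiset.count_pos, hcnt, Multiset.count_eq_zero_of_notMem hnc]
            have : 0 < F.count c := Multiset.count_pos.2 h2.1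
            omega
        have hcycne : cyc L ≠ 0 := by
          intro h0
          have := cyc_card L
          rw [h0] at this
          simp at this
          exact hL (List.eq_nil_of_length_eq_zero this.symm)
        obtain ⟨e0, he0⟩ := Multiset.exists_mem_of_ne_zero hcycne
        have he0F : e0 ∈ F := Multiset.mem_of_le hle he0
        have hfF : f ∈ F := Multiset.mem_of_le (hR ▸ tsub_le_self) hfR
        have he0R := hinv e0 (conn f hfF e0 he0F)
        exact (hmemL e0 he0R).1 (mem_of_mem_cyc he0).1
      obtain ⟨v, hvL, hvout⟩ := hclaim
      obtain ⟨L2, hL2ne, hL2h, hL2le⟩ := exists_closed_trail R balR v hvout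
      obtain ⟨n, t, hrot⟩ := exists_rotate_head' hvL
      obtain ⟨t2, rfl⟩ : ∃ t2, L2 = v :: t2 := by
        cases L2 with
        | nil => simp at hL2ne
        | cons a s =>
            have : a = v := by simpa using hL2h
            exact ⟨s, by rw [this]⟩
      set L'' := (v :: t) ++ (v :: t2) with hL''
      have hcycL'' : cyc L'' = cyc L + cyc (v :: t2) := by
        rw [hL'', cyc_append, ← hrot, cyc_rotate]
      have hle'' : cyc L'' ≤ F := by
        rw [hcycL'', ← hFR]
        exact add_le_add le_rfl hL2le
      have hcard'' : Multiset.card F ≤ Multiset.card (cyc L'') + d := by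
        rw [hcycL'', Multiset.card_add, cyc_card (v :: t2)]
        have : 0 < (v :: t2).length := by simp
        omega
      exact ih L'' (by simp [hL'']) hle'' hcard''

lemma euler (F : Multiset (Fin N × Fin N)) (hF : F ≠ 0) (bal : ∀ u, dOut F u = dIn F u)
    (conn : ∀ e ∈ F, ∀ f ∈ F, Relation.ReflTransGen (step F) e f) :
    ∃ L : List (Fin N), L ≠ [] ∧ cyc L = F := by
  obtain ⟨e, he⟩ := Multiset.exists_mem_of_ne_zero hF
  have hpos : 0 < dOut F e.1 := by
    rw [dOut, Multiset.card_pos_iff_exists_mem]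
    exact ⟨e, Multiset.mem_filter.2 ⟨he, rfl⟩⟩
  obtain ⟨L, hLne, _, hle⟩ := exists_closed_trail F bal e.1 hpos
  exact euler_aux F bal conn (Multiset.card F) L hLne hle (by omega)

lemma zip_rotate_length (Q : List (Fin N)) : (Q.zip (Q.rotate 1)).length = Q.length := by
  rw [List.length_zip]
  simp

lemma cyc_chain_from_first (Q : List (Fin N)) (hQ : 0 < Q.length) :
    ∀ j (hj : j < Q.length), Relation.ReflTransGen (step (cyc Q))
      ((Q.zip (Q.rotate 1))[0]'(by rw [zip_rotate_length]; omega))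
      ((Q.zip (Q.rotate 1))[j]'(by rw [zip_rotate_length]; omega)) := by
  intro j
  induction j with
  | zero => intro hj; exact .refl
  | succ j ihj =>
      intro hj
      refine (ihj (by omega)).tail ?_
      constructor
      · exact Multiset.mem_coe.2 (List.getElem_mem _)
      · rw [List.getElem_zip, List.getElem_zip, List.getElem_rotate]
        simp only
        congr 1
        exact Nat.mod_eq_of_lt hj

lemma cyc_conn (Q : List (Fin N)) :
    ∀ e ∈ cyc Q, ∀ f ∈ cyc Q, Relation.ReflTransGen (step (cyc Q)) e f := by
  intro e he f hf
  have hQ : 0 < Q.length := by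
    rcases Nat.eq_zero_or_pos Q.length with h0 | h
    · rw [List.eq_nil_of_length_eq_zero h0] at he
      simp [cyc] at he
    · exact h
  obtain ⟨i, hi, hie⟩ := List.getElem_of_mem (Multiset.mem_coe.1 he)
  rw [zip_rotate_length] at hi
  set Q' := Q.rotate i with hQ'
  have hcyc' : cyc Q' = cyc Q := cyc_rotate Q i
  have hf' : f ∈ cyc Q' := by rw [hcyc']; exact hf
  have hlen' : Q'.length = Q.length := by simp [hQ']
  obtain ⟨j, hj, hjf⟩ := List.getElem_of_mem (Multiset.mem_coe.1 hf')
  rw [zip_rotate_length, hlen'] at hj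
  have h0 : (Q'.zip (Q'.rotate 1))[0]'(by rw [zip_rotate_length]; omega) = e := by
    rw [← hie, List.getElem_zip, List.getElem_zip]
    have e1 : Q'[0]'(by omega) = Q[i]'(by omega) := by
      simp only [hQ', List.getElem_rotate]
      congr 1
      rw [Nat.zero_add, Nat.mod_eq_of_lt hi]
    have e2 : (Q'.rotate 1)[0]'(by simp [hlen']; omega) = (Q.rotate 1)[i]'(by simp; omega) := by
      simp only [hQ', List.rotate_rotate, List.getElem_rotate]
      congr 1
      rw [Nat.zero_add]
    rw [e1, e2]
  have hchain := cyc_chain_from_first Q' (by omega) j (by omega)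
  rw [h0] at hchain
  rw [← hjf]
  rw [hcyc'] at hchain
  exact hchain

lemma exists_half {α : Type*} [DecidableEq α] :
    ∀ n (E : Multiset α), Multiset.card E = n → (∀ e, Even (E.count e)) →
      ∃ F, F + F = E := by
  intro n
  induction n using Nat.strong_induction_on with
  | _ n ih =>
    intro E hc he
    by_cases hE : E = 0
    · exact ⟨0, by simp [hE]⟩
    obtain ⟨a, ha⟩ := Multiset.exists_mem_of_ne_zero hE
    have hca : 2 ≤ E.count a := by
      have h1 : 0 < E.count a := Multiset.count_pos.2 ha
      have := he a
      rw [Nat.even_iff] at this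
      omega
    have ha2 : a ∈ E.erase a := by
      rw [← Multiset.count_pos, Multiset.count_erase_self]
      omega
    set E' := (E.erase a).erase a with hE'
    have hEeq : E = a ::ₘ a ::ₘ E' := by
      rw [hE', Multiset.cons_erase ha2, Multiset.cons_erase ha]
    have hcount : ∀ x, E.count x = E'.count x + (if x = a then 2 else 0) := by
      intro x
      rw [hEeq]
      by_cases hx : x = a <;> simp [Multiset.count_cons, hx]
    have hcard' : Multiset.card E' = n - 2 := by
      rw [hEeq] at hc; simp at hc; omega
    have hn2 : n - 2 < n := by
      rw [hEeq] at hc; simp at hc; omega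
    obtain ⟨F', hF'⟩ := ih (n - 2) hn2 E' hcard' (by
      intro e
      have h2 := he e
      have h3 := hcount e
      rw [Nat.even_iff] at h2 ⊢
      by_cases hx : e = a
      · rw [if_pos hx] at h3; omega
      · rw [if_neg hx] at h3; omega)
    refine ⟨a ::ₘ F', ?_⟩
    rw [Multiset.ext]
    intro x
    have h4 : E'.count x = F'.count x + F'.count x := by rw [← hF', Multiset.count_add]
    have h5 := hcount x
    by_cases hx : x = a
    · subst hx
      rw [if_pos rfl] at h5
      simp [Multiset.count_add, Multiset.count_cons]
      omega
    · rw [if_neg hx] at h5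
      simp [Multiset.count_add, Multiset.count_cons, hx]
      omega

section Encoding

variable {k ℓ : ℕ}

/-- the set of first-occurrence positions of `f` -/
def FOset (f : Fin k → Fin N) : Finset (Fin k) :=
  Finset.univ.filter (fun i => ∀ j, j < i → f j ≠ f i)

/-- first occurrence position of the value `f i` -/
def foPos (f : Fin k → Fin N) (i : Fin k) : Fin k :=
  (Finset.univ.filter (fun j => f j = f i)).min' ⟨i, by simp⟩

lemma foPos_val (f : Fin k → Fin N) (i : Fin k) : f (foPos f i) = f i := by
  have := (Finset.univ.filter (fun j => f j = f i)).min'_mem ⟨i, by simp⟩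
  rw [Finset.mem_filter] at this
  exact this.2

lemma foPos_mem (f : Fin k → Fin N) (i : Fin k) : foPos f i ∈ FOset f := by
  rw [FOset, Finset.mem_filter]
  refine ⟨Finset.mem_univ _, fun j hj hfj => ?_⟩
  have hjmem : j ∈ Finset.univ.filter (fun j => f j = f i) := by
    rw [Finset.mem_filter]
    exact ⟨Finset.mem_univ _, hfj.trans (foPos_val f i)⟩
  have := Finset.min'_le _ j hjmem
  exact absurd this (not_le.2 hj)

lemma FOset_card (f : Fin k → Fin N) (hℓ : (Finset.univ.image f).card = ℓ) :
    (FOset f).card = ℓ := by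
  have hinj : Set.InjOn f (FOset f) := by
    intro i hi i' hi' hff
    rw [FOset, Finset.coe_filter] at hi hi'
    simp at hi hi'
    rcases lt_trichotomy i i' with h | h | h
    · exact absurd hff (hi' i h)
    · exact h
    · exact absurd hff.symm (hi i' h)
  have himg : (FOset f).image f = Finset.univ.image f := by
    apply Finset.Subset.antisymm
    · exact Finset.image_subset_image (Finset.subset_univ _)
    · intro x hx
      rw [Finset.mem_image] at hx ⊢
      obtain ⟨i, _, rfl⟩ := hx
      exact ⟨foPos f i, foPos_mem f i, foPos_val f i⟩
  rw [← hℓ, ← himg, Finset.card_image_of_injOn hinj]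

lemma orderIso_rank {n c : ℕ} (F : Finset (Fin n)) (hc : F.card = c) (i : Fin n) (hi : i ∈ F) :
    (((F.orderIsoOfFin hc).symm ⟨i, hi⟩ : Fin c) : ℕ) = (F.filter (· < i)).card := by
  set m := (F.orderIsoOfFin hc).symm ⟨i, hi⟩ with hm
  have him : F.orderIsoOfFin hc m = ⟨i, hi⟩ := by rw [hm, OrderIso.apply_symm_apply]
  have hset : F.filter (· < i) =
      (Finset.Iio m).image (fun s => (F.orderIsoOfFin hc s : Fin n)) := by
    ext x
    rw [Finset.mem_filter, Finset.mem_image]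
    constructor
    · rintro ⟨hxF, hxi⟩
      refine ⟨(F.orderIsoOfFin hc).symm ⟨x, hxF⟩, ?_, by rw [OrderIso.apply_symm_apply]⟩
      rw [Finset.mem_Iio, hm]
      rw [(F.orderIsoOfFin hc).symm.lt_iff_lt]
      exact Subtype.mk_lt_mk.2 hxi
    · rintro ⟨s, hs, rfl⟩
      refine ⟨Finset.coe_mem _, ?_⟩
      rw [Finset.mem_Iio] at hs
      have : F.orderIsoOfFin hc s < F.orderIsoOfFin hc m := by
        rw [OrderIso.lt_iff_lt]
        exact hs
      rw [him] at this
      exact this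
  rw [hset, Finset.card_image_of_injective _ (fun a b hab => by
      have : (F.orderIsoOfFin hc a : Fin n) = F.orderIsoOfFin hc b := hab
      exact (F.orderIsoOfFin hc).injective (Subtype.coe_injective this)),
    Fin.card_Iio]

end Encoding

section Encoding2

variable {k ℓ : ℕ}

lemma orderIso_apply_rank {n c : ℕ} (F : Finset (Fin n)) (hc : F.card = c) (i : Fin n)
    (hi : i ∈ F) (hr : (F.filter (· < i)).card < c) :
    ((F.orderIsoOfFin hc ⟨(F.filter (· < i)).card, hr⟩ : {x // x ∈ F}) : Fin n) = i := by
  have h2 : (F.orderIsoOfFin hc).symm ⟨i, hi⟩ = ⟨(F.filter (· < i)).card, hr⟩ :=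
    Fin.ext (orderIso_rank F hc i hi)
  rw [← h2, OrderIso.apply_symm_apply]

lemma rank_lt {n c : ℕ} (F : Finset (Fin n)) (hc : F.card = c) (i : Fin n) (hi : i ∈ F) :
    (F.filter (· < i)).card < c := by
  rw [← hc]
  apply Finset.card_lt_card
  rw [Finset.ssubset_iff_of_subset (Finset.filter_subset _ _)]
  exact ⟨i, hi, by simp⟩

def padFin (h1 : 1 ≤ ℓ) (n : ℕ) : Fin ℓ := if h : n < ℓ then ⟨n, h⟩ else ⟨0, h1⟩

def rankA (A : Fin (k - ℓ) → Fin k) (i : Fin k) : ℕ :=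
  ((Finset.univ : Finset (Fin k)).filter (fun j => j < i ∧ ∀ t, A t ≠ j)).card

noncomputable def buildFun (h1 : 1 ≤ ℓ) (g : Fin ℓ → Fin N) (A p : Fin (k - ℓ) → Fin k)
    (i : Fin k) : Fin N :=
  if h : ∃ t, A t = i then g (padFin h1 (p h.choose)) else g (padFin h1 (rankA A i))

lemma exists_code (h1 : 1 ≤ ℓ) (hlk : ℓ ≤ k) (L : List (Fin N)) (hlen : L.length = k)
    (hcard : L.toFinset.card = ℓ) :
    ∃ (g : Fin ℓ → Fin N) (A p : Fin (k - ℓ) → Fin k),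
      List.ofFn (buildFun h1 g A p) = L := by
  have hfget : ∀ i : Fin k, (i : ℕ) < L.length := by intro i; rw [hlen]; exact i.isLt
  set f : Fin k → Fin N := fun i => L[(i : ℕ)]'(hfget i) with hf
  have himgf : Finset.univ.image f = L.toFinset := by
    ext x
    rw [Finset.mem_image, List.mem_toFinset]
    constructor
    · rintro ⟨i, _, rfl⟩; exact List.getElem_mem _
    · intro hx
      obtain ⟨i, hi, hix⟩ := List.getElem_of_mem hx
      exact ⟨⟨i, by omega⟩, Finset.mem_univ _, hix⟩
  have hFO : (FOset f).card = ℓ := FOset_card f (by rw [himgf, hcard])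
  have hR : ((FOset f)ᶜ : Finset (Fin k)).card = k - ℓ := by
    rw [Finset.card_compl, hFO, Fintype.card_fin]
  set eF := (FOset f).orderIsoOfFin hFO with heF
  set eR := ((FOset f)ᶜ).orderIsoOfFin hR with heR
  set A : Fin (k - ℓ) → Fin k := fun t => (eR t : Fin k) with hA
  set g : Fin ℓ → Fin N := fun m => f (eF m) with hg
  set p : Fin (k - ℓ) → Fin k :=
    fun t => Fin.castLE hlk (eF.symm ⟨foPos f (A t), foPos_mem f (A t)⟩) with hp
  have hrangeA : ∀ j : Fin k, (∃ t, A t = j) ↔ j ∈ (FOset f)ᶜ := by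
    intro j
    constructor
    · rintro ⟨t, rfl⟩; exact Finset.coe_mem _
    · intro hj
      refine ⟨eR.symm ⟨j, hj⟩, ?_⟩
      show ((eR (eR.symm ⟨j, hj⟩) : {x // x ∈ (FOset f)ᶜ}) : Fin k) = j
      rw [OrderIso.apply_symm_apply]
  have hbuild : ∀ i, buildFun h1 g A p i = f i := by
    intro i
    by_cases hiR : i ∈ (FOset f)ᶜ
    · have hex : ∃ t, A t = i := (hrangeA i).2 hiR
      rw [buildFun, dif_pos hex]
      have hAt : A hex.choose = i := hex.choose_spec
      have hpt : (p hex.choose : ℕ) = (eF.symm ⟨foPos f i, foPos_mem f i⟩ : Fin ℓ) := by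
        rw [hp]
        simp only [Fin.coe_castLE]
        congr 2
        rw [hAt]
      have hpad : padFin h1 (p hex.choose) = eF.symm ⟨foPos f i, foPos_mem f i⟩ := by
        rw [padFin, dif_pos (by rw [hpt]; exact (eF.symm _).isLt)]
        exact Fin.ext (by rw [hpt])
      rw [hpad, hg]
      simp only
      rw [OrderIso.apply_symm_apply]
      exact foPos_val f i
    · have hiF : i ∈ FOset f := by rwa [Finset.mem_compl, not_not] at hiR
      have hnex : ¬ ∃ t, A t = i := fun h => hiR ((hrangeA i).1 h)
      rw [buildFun, dif_neg hnex]
      have hrank : rankA A i = ((FOset f).filter (· < i)).card := by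
        rw [rankA]
        congr 1
        ext j
        simp only [Finset.mem_filter, Finset.mem_univ, true_and]
        constructor
        · rintro ⟨hji, hnt⟩
          refine ⟨?_, hji⟩
          by_contra hjF
          have : j ∈ (FOset f)ᶜ := Finset.mem_compl.2 hjF
          obtain ⟨t, ht⟩ := (hrangeA j).2 this
          exact hnt t ht
        · rintro ⟨hjF, hji⟩
          refine ⟨hji, fun t ht => ?_⟩
          have hcm : A t ∈ (FOset f)ᶜ := Finset.coe_mem (eR t)
          rw [ht] at hcm
          exact (Finset.mem_compl.1 hcm) hjF
      rw [hrank]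
      have hr := rank_lt (FOset f) hFO i hiF
      have hpad : padFin h1 ((FOset f).filter (· < i)).card =
          ⟨((FOset f).filter (· < i)).card, hr⟩ := by
        rw [padFin, dif_pos hr]
      have hIso : ((eF ⟨((FOset f).filter (· < i)).card, hr⟩ : {x // x ∈ FOset f}) : Fin k) = i := by
        rw [heF]
        exact orderIso_apply_rank (FOset f) hFO i hiF hr
      rw [hpad, hg]
      simp only
      rw [hIso]
  refine ⟨g, A, p, ?_⟩
  apply List.ext_getElem (by simp [hlen])
  intro i hi1 hi2
  rw [List.getElem_ofFn]
  exact hbuild ⟨i, by simpa using hi1⟩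

end Encoding2


lemma closed_decomp {N : ℕ} (P : List (Fin N)) (hc : IsClosedPath P) (hlen : 2 ≤ P.length) :
    pathEdges P = cyc P.dropLast ∧ P.toFinset = P.dropLast.toFinset := by
  obtain ⟨hne, hcl⟩ := hc
  rcases P with _ | ⟨a, t⟩
  · simp at hne
  rcases t with _ | ⟨b, t'⟩
  · simp at hlen
  set t := b :: t' with ht
  have htne : t ≠ [] := by simp [ht]
  have hlast : t.getLast htne = a := by
    rw [List.getLast?_eq_getLast (show a :: t ≠ [] by simp)] at hcl
    have h2 : (a :: t).getLast (by simp) = a := by simpa using hcl.symm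
    rw [← List.getLast_cons htne]
    exact h2
  have ht' : t.dropLast ++ [a] = t := by
    rw [← hlast]
    exact List.dropLast_append_getLast htne
  have hdl : (a :: t).dropLast = a :: t.dropLast := by
    rw [ht]
    rfl
  constructor
  · rw [pathEdges, List.tail_cons, hdl, cyc, rotate_one_cons, ht']
    have hcons : a :: t = (a :: t.dropLast) ++ [a] := by
      rw [List.cons_append, ht']
    rw [hcons, zip_append_right_trunc _ _ _ (by
      simp only [List.length_cons, List.length_dropLast, ht]
      simp)]
  · rw [hdl]
    have : t.toFinset = t.dropLast.toFinset ∪ {a} := by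
      conv_lhs => rw [← ht']
      simp
    simp only [List.toFinset_cons, this]
    ext x
    simp

noncomputable def decodeGraph (N k ℓ : ℕ) (h1 : 1 ≤ ℓ)
    (c : (Fin ℓ → Fin N) × (Fin (k - ℓ) → Fin k) × (Fin (k - ℓ) → Fin k) × Fin k) :
    RootedMultiDigraph N where
  G := { V := (List.ofFn (buildFun h1 c.1 c.2.1 c.2.2.1)).toFinset
         E := cyc (List.ofFn (buildFun h1 c.1 c.2.1 c.2.2.1))
              + cyc (List.ofFn (buildFun h1 c.1 c.2.1 c.2.2.1))
         edge_mem := by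
           intro e he
           rw [Multiset.mem_add, or_self] at he
           have h := mem_of_mem_cyc he
           exact ⟨List.mem_toFinset.2 h.1, List.mem_toFinset.2 h.2⟩ }
  root := ((List.ofFn (buildFun h1 c.1 c.2.1 c.2.2.1)).zip
      ((List.ofFn (buildFun h1 c.1 c.2.1 c.2.2.1)).rotate 1))[(c.2.2.2 : ℕ)]'(by
        rw [zip_rotate_length, List.length_ofFn]; exact c.2.2.2.isLt)
  root_mem := by
    refine Multiset.mem_add.2 (Or.inl ?_)
    exact Multiset.mem_coe.2 (List.getElem_mem _)

lemma rooted_ext {N : ℕ} {A B : RootedMultiDigraph N} (hV : A.G.V = B.G.V)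
    (hE : A.G.E = B.G.E) (hr : A.root = B.root) : A = B := by
  obtain ⟨⟨V1, E1, hm1⟩, r1, hr1⟩ := A
  obtain ⟨⟨V2, E2, hm2⟩, r2, hr2⟩ := B
  simp only at hV hE hr
  subst hV hE hr
  rfl

end GraphCountAux

/-- **Graphs counting.** For `1 ≤ ℓ ≤ min{k,N}`, the number of rooted even digraphs on
`[N]` with `ℓ` vertices and `2k` edges (with multiplicity) is at most
`N^ℓ · k^{2(k-ℓ)+1}`. -/
theorem count_rooted_even_digraphs (N k ℓ : ℕ) (h1 : 1 ≤ ℓ) (hlk : ℓ ≤ k) (hlN : ℓ ≤ N) :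
    {G : RootedMultiDigraph N | IsEvenDigraph G.G ∧ G.G.V.card = ℓ ∧
        Multiset.card G.G.E = 2 * k}.ncard
      ≤ N ^ ℓ * k ^ (2 * (k - ℓ) + 1) := by
  classical
  open GraphCountAux in
  have hk : 1 ≤ k := h1.trans hlk
  have hsub : {G : RootedMultiDigraph N | IsEvenDigraph G.G ∧ G.G.V.card = ℓ ∧
      Multiset.card G.G.E = 2 * k} ⊆ Set.range (GraphCountAux.decodeGraph N k ℓ h1) := by
    rintro R ⟨hev, hV, hE⟩
    obtain ⟨P, ⟨hPc, hPev⟩, hPV, hPE⟩ := hev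
    have hPne : P ≠ [] := hPc.1
    have hPlen : P.length = 2 * k + 1 := by
      have hc1 : Multiset.card (pathEdges P) = (P.zip P.tail).length := by
        rw [pathEdges, Multiset.coe_card]
      rw [← hPE, hE] at hc1
      rw [List.length_zip, List.length_tail] at hc1
      have : 1 ≤ P.length := List.length_pos_iff.2 hPne
      omega
    obtain ⟨hEQ, hVQ⟩ := closed_decomp P hPc (by omega)
    set Q := P.dropLast with hQ
    have hEcyc : R.G.E = cyc Q := by rw [hPE, hEQ]
    obtain ⟨F, hFF⟩ := exists_half (Multiset.card R.G.E) R.G.E rfl (by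
      intro e
      rw [hPE]
      exact hPev e)
    have hcardF : Multiset.card F = k := by
      have : Multiset.card (F + F) = 2 * k := by rw [hFF]; exact hE
      rw [Multiset.card_add] at this
      omega
    have hFne : F ≠ 0 := by
      intro h0
      rw [h0] at hcardF
      simp at hcardF
      omega
    have memFE : ∀ e : Fin N × Fin N, e ∈ F ↔ e ∈ R.G.E := by
      intro e
      rw [← hFF, Multiset.mem_add, or_self]
    have balF : ∀ u, dOut F u = dIn F u := by
      intro u
      have h1' : dOut R.G.E u = dOut F u + dOut F u := by rw [← hFF, dOut_add]
      have h2' : dIn R.G.E u = dIn F u + dIn F u := by rw [← hFF, dIn_add]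
      have h3' : dOut R.G.E u = dIn R.G.E u := by rw [hEcyc]; exact cyc_balanced Q u
      omega
    have connF : ∀ e ∈ F, ∀ f ∈ F, Relation.ReflTransGen (step F) e f := by
      intro e he f hf
      have he' : e ∈ cyc Q := by rw [← hEcyc]; exact (memFE e).1 he
      have hf' : f ∈ cyc Q := by rw [← hEcyc]; exact (memFE f).1 hf
      refine Relation.ReflTransGen.mono ?_ e f (cyc_conn Q e he' f hf')
      rintro a b ⟨hb, hab⟩
      exact ⟨(memFE b).2 (by rw [hEcyc]; exact hb), hab⟩
    obtain ⟨L, hLne, hcycL⟩ := euler F hFne balF connF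
    have hLlen : L.length = k := by
      have := cyc_card L
      rw [hcycL, hcardF] at this
      omega
    have hLfin : L.toFinset = Q.toFinset := by
      ext x
      rw [List.mem_toFinset, List.mem_toFinset, mem_cyc_fst, mem_cyc_fst]
      constructor
      · rintro ⟨e, he, rfl⟩
        exact ⟨e, by rw [← hEcyc]; exact (memFE e).1 (hcycL ▸ he), rfl⟩
      · rintro ⟨e, he, rfl⟩
        refine ⟨e, ?_, rfl⟩
        rw [hcycL]
        exact (memFE e).2 (by rw [hEcyc]; exact he)
    have hLcard : L.toFinset.card = ℓ := by
      rw [hLfin, ← hVQ, ← hPV]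
      exact hV
    obtain ⟨g, A, p, hofn⟩ := exists_code h1 hlk L hLlen hLcard
    have hrootF : R.root ∈ cyc L := by
      rw [hcycL]
      exact (memFE R.root).2 R.root_mem
    obtain ⟨r, hr, hre⟩ := List.getElem_of_mem (Multiset.mem_coe.1 hrootF)
    rw [zip_rotate_length, hLlen] at hr
    refine ⟨⟨g, A, p, ⟨r, hr⟩⟩, ?_⟩
    apply rooted_ext
    · show (List.ofFn (buildFun h1 g A p)).toFinset = R.G.V
      rw [hofn, hLfin, ← hVQ, hPV]
    · show cyc (List.ofFn (buildFun h1 g A p)) + cyc (List.ofFn (buildFun h1 g A p)) = R.G.E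
      rw [hofn, hcycL, hFF]
    · show ((List.ofFn (buildFun h1 g A p)).zip
        ((List.ofFn (buildFun h1 g A p)).rotate 1))[(r : ℕ)]'_ = R.root
      simp only [hofn]
      exact hre
  have h2 := Set.ncard_le_ncard hsub (Set.finite_range _)
  refine h2.trans ?_
  have h3 : (Set.range (GraphCountAux.decodeGraph N k ℓ h1)).ncard ≤
      Nat.card ((Fin ℓ → Fin N) × (Fin (k - ℓ) → Fin k) × (Fin (k - ℓ) → Fin k) × Fin k) := by
    rw [← Set.image_univ]
    refine (Set.ncard_image_le Set.finite_univ).trans ?_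
    rw [Set.ncard_univ]
  refine h3.trans ?_
  rw [Nat.card_eq_fintype_card]
  simp only [Fintype.card_prod, Fintype.card_fun, Fintype.card_fin]
  have hexp : k ^ (k - ℓ) * (k ^ (k - ℓ) * k) = k ^ (2 * (k - ℓ) + 1) := by
    rw [show 2 * (k - ℓ) + 1 = (k - ℓ) + ((k - ℓ) + 1) by ring, pow_add, pow_add, pow_one]
  rw [hexp]
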